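/- Let q be a prime and suppose the set PR(q) = {p prime : q mod p generates the unit group (ℤ/pℤ)ˣ} is infinite. Let BS(1,q) be the Baumslag–Solitar group with presentation ⟨a, b | bab⁻¹ = a^q⟩. Then for every element g ≠ 1 of BS(1,q), there exist a prime p ∈ PR(q) and a group homomorphism φ : BS(1,q) → G_p such that φ(g) ≠ 1; equivalently, the homomorphism from BS(1,q) into the direct product ∏_{p ∈ PR(q)} G_p induced by the canonical quotient maps is injective. -/

import Mathlib

/-- The holomorph-type action: a unit `u` of `ZMod p` acts on the additive group `ZMod p`
(viewed multiplicatively) by multiplication by `u`. -/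
def holAction (p : ℕ) : (ZMod p)ˣ →* MulAut (Multiplicative (ZMod p)) where
  toFun u := AddEquiv.toMultiplicative (AddAut.mulLeft u)
  map_one' := by ext x; simp [AddEquiv.toMultiplicative, AddAut.mulLeft]
  map_mul' u v := by ext x; simp [AddEquiv.toMultiplicative, AddAut.mulLeft, mul_smul]

/-- `G_p = (ℤ/pℤ) ⋊ (ℤ/pℤ)ˣ`, the holomorph of the cyclic group of order `p`, with units
acting by multiplication. -/
def Holo (p : ℕ) : Type :=
  SemidirectProduct (Multiplicative (ZMod p)) (ZMod p)ˣ (holAction p)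

instance (p : ℕ) : Group (Holo p) :=
  inferInstanceAs (Group (SemidirectProduct _ _ _))

/-- The single defining relation `b * a * b⁻¹ * (a^q)⁻¹` of the Baumslag–Solitar group
`BS(1,q) = ⟨a, b ∣ b a b⁻¹ = a^q⟩`, where `a = FreeGroup.of 0` and `b = FreeGroup.of 1`. -/
def bsRel (q : ℕ) : Set (FreeGroup (Fin 2)) :=
  {FreeGroup.of 1 * FreeGroup.of 0 * (FreeGroup.of 1)⁻¹ * (FreeGroup.of 0 ^ q)⁻¹}

/-- The Baumslag–Solitar group `BS(1,q)` as a presented group. -/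
def BS (q : ℕ) : Type :=
  PresentedGroup (bsRel q)

instance (q : ℕ) : Group (BS q) :=
  inferInstanceAs (Group (PresentedGroup _))

/-- `PR q` is the set of primes `p` such that `q` mod `p` generates `(ℤ/pℤ)ˣ`. -/
def PR (q : ℕ) : Set ℕ :=
  {p | p.Prime ∧ ∃ u : (ZMod p)ˣ, (u : ZMod p) = (q : ZMod p) ∧
    ∀ v : (ZMod p)ˣ, v ∈ Subgroup.zpowers u}

namespace BSaux

variable {q : ℕ}

def A (q : ℕ) : BS q := PresentedGroup.of 0
def B (q : ℕ) : BS q := PresentedGroup.of 1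

lemma rel (q : ℕ) : B q * A q * (B q)⁻¹ = A q ^ q := by
  have h : (PresentedGroup.mk (bsRel q))
      (FreeGroup.of 1 * FreeGroup.of 0 * (FreeGroup.of 1)⁻¹ * (FreeGroup.of 0 ^ q)⁻¹) = 1 := by
    apply (QuotientGroup.eq_one_iff _).2
    exact Subgroup.subset_normalClosure rfl
  simp only [map_mul, map_inv, map_pow] at h
  have := mul_eq_one_iff_eq_inv.1 h
  rw [inv_inv] at this
  exact this

lemma conj_zpow (m : ℤ) : B q * A q ^ m * (B q)⁻¹ = A q ^ ((q : ℤ) * m) := by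
  have h : (MulAut.conj (B q)) (A q ^ m) = ((MulAut.conj (B q)) (A q)) ^ m := map_zpow _ _ _
  simp only [MulAut.conj_apply] at h
  rw [h, rel q, ← zpow_natCast, ← zpow_mul, mul_comm]

lemma conj_pow (k : ℕ) (m : ℤ) : B q ^ k * A q ^ m * (B q ^ k)⁻¹ = A q ^ ((q : ℤ) ^ k * m) := by
  induction k generalizing m with
  | zero => simp
  | succ k ih =>
    have : B q ^ (k+1) * A q ^ m * (B q ^ (k+1))⁻¹
        = B q * (B q ^ k * A q ^ m * (B q ^ k)⁻¹) * (B q)⁻¹ := by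
      rw [pow_succ]; group
    rw [this, ih, conj_zpow, ← mul_assoc, ← pow_succ']

lemma pull (k : ℕ) (m : ℤ) : B q ^ k * A q ^ m = A q ^ ((q : ℤ) ^ k * m) * B q ^ k := by
  have := conj_pow (q := q) k m
  rw [← this]; group

lemma pull_inv (k : ℕ) (m : ℤ) :
    A q ^ m * (B q ^ k)⁻¹ = (B q ^ k)⁻¹ * A q ^ ((q : ℤ) ^ k * m) := by
  rw [← conj_pow (q := q) k m]; group

lemma normal_form (g : BS q) :
    ∃ i j : ℕ, ∃ n : ℤ, g = (B q ^ i)⁻¹ * A q ^ n * B q ^ j := by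
  have hmem : g ∈ Subgroup.closure (G := BS q) (Set.range (PresentedGroup.of : Fin 2 → BS q)) := by
    have h : (g : PresentedGroup (bsRel q)) ∈ Subgroup.closure (Set.range PresentedGroup.of) := by
      rw [PresentedGroup.closure_range_of]; trivial
    exact h
  refine Subgroup.closure_induction ?_ ?_ ?_ ?_ hmem
  · rintro x ⟨i, rfl⟩
    fin_cases i
    · exact ⟨0, 0, 1, by show A q = (B q ^ 0)⁻¹ * A q ^ (1:ℤ) * B q ^ 0; simp⟩
    · exact ⟨0, 1, 0, by show B q = (B q ^ 0)⁻¹ * A q ^ (0:ℤ) * B q ^ 1; simp⟩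
  · exact ⟨0, 0, 0, by simp⟩
  · rintro x y - - ⟨i, j, n, rfl⟩ ⟨i', j', n', rfl⟩
    rcases le_or_gt i' j with h | h
    · -- j ≥ i', k = j - i'
      refine ⟨i, (j - i') + j', n + (q : ℤ) ^ (j - i') * n', ?_⟩
      have hj : B q ^ j = B q ^ (j - i') * B q ^ i' := by
        rw [← pow_add, Nat.sub_add_cancel h]
      calc (B q ^ i)⁻¹ * A q ^ n * B q ^ j * ((B q ^ i')⁻¹ * A q ^ n' * B q ^ j')
          = (B q ^ i)⁻¹ * A q ^ n * (B q ^ (j - i') * A q ^ n') * B q ^ j' := by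
            rw [hj]; group
        _ = (B q ^ i)⁻¹ * A q ^ n * (A q ^ ((q:ℤ) ^ (j - i') * n') * B q ^ (j - i')) * B q ^ j' := by
            rw [pull]
        _ = (B q ^ i)⁻¹ * A q ^ (n + (q:ℤ) ^ (j - i') * n') * B q ^ ((j - i') + j') := by
            rw [zpow_add, pow_add]; group
    · -- j < i', k = i' - j
      refine ⟨i + (i' - j), j', (q : ℤ) ^ (i' - j) * n + n', ?_⟩
      have hi' : B q ^ i' = B q ^ (i' - j) * B q ^ j := by
        rw [← pow_add, Nat.sub_add_cancel h.le]
      calc (B q ^ i)⁻¹ * A q ^ n * B q ^ j * ((B q ^ i')⁻¹ * A q ^ n' * B q ^ j')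
          = (B q ^ i)⁻¹ * (A q ^ n * (B q ^ (i' - j))⁻¹) * A q ^ n' * B q ^ j' := by
            rw [hi']; group
        _ = (B q ^ i)⁻¹ * ((B q ^ (i' - j))⁻¹ * A q ^ ((q:ℤ) ^ (i' - j) * n)) * A q ^ n' * B q ^ j' := by
            rw [pull_inv]
        _ = (B q ^ (i + (i' - j)))⁻¹ * A q ^ ((q:ℤ) ^ (i' - j) * n + n') * B q ^ j' := by
            rw [zpow_add, pow_add]; group
  · rintro x - ⟨i, j, n, rfl⟩
    exact ⟨j, i, -n, by group⟩

end BSaux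

namespace Part2

open SemidirectProduct Multiplicative

variable {p : ℕ}

abbrev Holo' (p : ℕ) := Multiplicative (ZMod p) ⋊[holAction p] (ZMod p)ˣ

lemma holAction_apply (u : (ZMod p)ˣ) (m : Multiplicative (ZMod p)) :
    holAction p u m = ofAdd ((u : ZMod p) * m.toAdd) := rfl

def fgen (u : (ZMod p)ˣ) : Fin 2 → Holo' p :=
  ![SemidirectProduct.inl (ofAdd 1), SemidirectProduct.inr u]

lemma relcheck (q : ℕ) (u : (ZMod p)ˣ) (hu : (u : ZMod p) = (q : ZMod p)) :
    ∀ r ∈ bsRel q, FreeGroup.lift (fgen u) r = 1 := by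
  intro r hr
  rw [bsRel, Set.mem_singleton_iff] at hr
  subst hr
  simp only [map_mul, map_inv, map_pow, FreeGroup.lift_apply_of, fgen,
    Matrix.cons_val_zero, Matrix.cons_val_one, Matrix.head_cons]
  rw [mul_inv_eq_one, ← map_inv, ← inl_aut, ← map_pow]
  congr 1
  rw [holAction_apply]
  simp only [toAdd_ofAdd, mul_one]
  rw [hu, ← ofAdd_nsmul]
  congr 1
  simp [nsmul_eq_mul]

lemma prod_left (a b : (ZMod p)ˣ) (m : Multiplicative (ZMod p)) :
    (inr a * inl m * inr b : Holo' p).left = holAction p a m := by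
  simp

lemma prod_right (a b : (ZMod p)ˣ) (m : Multiplicative (ZMod p)) :
    (inr a * inl m * inr b : Holo' p).right = a * b := by
  simp

end Part2

open SemidirectProduct Multiplicative

/-- If `q` is a prime for which the set `PR(q)` of primes admitting `q` as a primitive root is
infinite, then `BS(1,q)` is residually in the family `{G_p : p ∈ PR(q)}`: every `g ≠ 1` is
detected by a homomorphism `BS(1,q) → G_p` for some `p ∈ PR(q)`. -/
theorem stmt_15 (q : ℕ) (hq : q.Prime) (hinf : (PR q).Infinite)
    (g : BS q) (hg : g ≠ 1) :
    ∃ p ∈ PR q, ∃ φ : BS q →* Holo p, φ g ≠ 1 := by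
  obtain ⟨i, j, n, hgf⟩ := BSaux.normal_form g
  obtain ⟨p, hpPR, hplt⟩ := hinf.exists_gt (n.natAbs + ((j : ℤ) - (i : ℤ)).natAbs + 1)
  obtain ⟨hp, u, hu, hgen⟩ := hpPR
  haveI : Fact p.Prime := ⟨hp⟩
  set φ : BS q →* Part2.Holo' p := PresentedGroup.toGroup (Part2.relcheck q u hu) with hφdef
  refine ⟨p, ⟨hp, u, hu, hgen⟩, φ, ?_⟩
  intro hφ
  have hA : φ (BSaux.A q) = inl (ofAdd 1) :=
    PresentedGroup.toGroup.of (Part2.relcheck q u hu)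
  have hB : φ (BSaux.B q) = inr u :=
    PresentedGroup.toGroup.of (Part2.relcheck q u hu)
  have key : φ g = inr ((u ^ i)⁻¹) * inl (ofAdd ((n : ZMod p))) * inr (u ^ j) := by
    rw [hgf, map_mul, map_mul, map_inv, map_pow, map_pow, map_zpow, hA, hB,
      ← map_pow, ← map_pow, ← map_inv, ← map_zpow]
    congr 2
    rw [← ofAdd_zsmul]
    congr 1
    rw [zsmul_eq_mul, mul_one]
  have hX : inr ((u ^ i)⁻¹) * inl (ofAdd ((n : ZMod p))) * inr (u ^ j)
      = (1 : Part2.Holo' p) := key.symm.trans hφ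
  have hl := congrArg SemidirectProduct.left hX
  have hr := congrArg SemidirectProduct.right hX
  rw [Part2.prod_left, one_left, Part2.holAction_apply] at hl
  rw [Part2.prod_right, one_right] at hr
  -- from hl : n ≡ 0 mod p
  have hn0 : n = 0 := by
    have h1 : ((((u ^ i)⁻¹ : (ZMod p)ˣ) : ZMod p) * (toAdd (ofAdd ((n : ZMod p))))) = 0 := by
      have := congrArg toAdd hl
      simpa using this
    rw [toAdd_ofAdd, Units.mul_right_eq_zero] at h1
    rw [ZMod.intCast_zmod_eq_zero_iff_dvd] at h1
    by_contra hne
    have h2 : p ∣ n.natAbs := Int.natCast_dvd.mp h1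
    have h3 : p ≤ n.natAbs := Nat.le_of_dvd (Int.natAbs_pos.mpr hne) h2
    omega
  -- from hr : j = i
  have hij : j = i := by
    have h1 : u ^ ((j : ℤ) - (i : ℤ)) = 1 := by
      rw [zpow_sub, zpow_natCast, zpow_natCast]
      rw [inv_mul_eq_one] at hr
      rw [← hr]
      group
    have h2 : ((orderOf u : ℤ)) ∣ ((j : ℤ) - (i : ℤ)) := orderOf_dvd_iff_zpow_eq_one.mpr h1
    have h3 : orderOf u = p - 1 := by
      rw [orderOf_eq_card_of_forall_mem_zpowers hgen, Nat.card_eq_fintype_card,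
        ZMod.card_units]
    by_contra hne
    have hsub : ((j : ℤ) - (i : ℤ)) ≠ 0 := by
      intro h0; exact hne (by omega)
    have h4 : (p - 1) ∣ ((j : ℤ) - (i : ℤ)).natAbs := by
      rw [h3] at h2
      exact Int.natCast_dvd.mp h2
    have h5 : p - 1 ≤ ((j : ℤ) - (i : ℤ)).natAbs :=
      Nat.le_of_dvd (Int.natAbs_pos.mpr hsub) h4
    have := hp.two_le
    omega
  apply hg
  rw [hgf, hn0, hij]
  simp
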